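/- For every d×d matrix v = (v^a_b) over K there exists a unique R-linear derivation V : R^𝐝 → R^𝐝 (equivalently, a K-linear derivation vanishing on the image of the structure map R → R^𝐝) such that for every f ∈ R and every multi-index i with |i| ≥ 1: V(f_i) = Σ_{a,b : i(b) ≥ 1} v^a_b · ((i − e_b)(a) + 1) · f_{i − e_b + e_a}. (This is the derivation characterized by Σ_i V(f_i) t^i = Σ_{a,b} v^a_b t^b ∂_{t^a} I(f), the infinitesimal form of the GL_d(K)-action on R^𝐝.) -/

import Mathlib

namespace Paper

/-- Multi-indices: finitely supported functions `Fin d → ℕ`. -/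
abbrev MIdx (d : ℕ) := Fin d →₀ ℕ

/-- The length `|i|` of a multi-index. -/
def deg {d : ℕ} (i : MIdx d) : ℕ := i.sum fun _ n => n

variable (K R : Type) [Field K] [CharZero K] [CommRing R] [Algebra K R]

/-- The defining relations of the algebra `R^𝐝`. -/
def relSet (d : ℕ) : Set (MvPolynomial (R × MIdx d) R) :=
  {p | (∃ f g : R, ∃ i : MIdx d,
          p = MvPolynomial.X (f + g, i) - MvPolynomial.X (f, i) - MvPolynomial.X (g, i)) ∨
       (∃ f g : R, ∃ i : MIdx d,
          p = MvPolynomial.X (f * g, i) -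
            ∑ q ∈ Finset.HasAntidiagonal.antidiagonal i, MvPolynomial.X (f, q.1) * MvPolynomial.X (g, q.2)) ∨
       (∃ f : R, p = MvPolynomial.X (f, (0 : MIdx d)) - MvPolynomial.C f) ∨
       (∃ (c : K) (i : MIdx d), 1 ≤ deg i ∧ p = MvPolynomial.X (algebraMap K R c, i))}

/-- The commutative `R`-algebra `R^𝐝` generated by the symbols `f_i`. -/
def Rd (d : ℕ) : Type :=
  MvPolynomial (R × MIdx d) R ⧸ Ideal.span (relSet K R d)

noncomputable instance (d : ℕ) : CommRing (Rd K R d) := Ideal.Quotient.commRing _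
noncomputable instance (d : ℕ) : Algebra R (Rd K R d) := Ideal.Quotient.algebra R
noncomputable instance (d : ℕ) : Algebra K (Rd K R d) := Ideal.Quotient.algebra K

/-- The generator `f_i` of `R^𝐝`. -/
noncomputable def gen {d : ℕ} (f : R) (i : MIdx d) : Rd K R d :=
  Ideal.Quotient.mk (Ideal.span (relSet K R d)) (MvPolynomial.X (f, i))

/-- The Taylor series `I(f) = Σ_i f_i t^i ∈ R^𝐝[[t^1,…,t^d]]`. -/
noncomputable def Ifun {d : ℕ} (f : R) : MvPowerSeries (Fin d) (Rd K R d) :=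
  fun i => gen K R f i

end Paper

set_option synthInstance.maxHeartbeats 1000000
set_option maxHeartbeats 1000000
set_option linter.unusedSectionVars false
set_option linter.unusedVariables false



namespace Paper

variable {K R : Type} [Field K] [CharZero K] [CommRing R] [Algebra K R] {d : ℕ}

lemma mk_rel {p : MvPolynomial (R × MIdx d) R} (hp : p ∈ relSet K R d) :
    Ideal.Quotient.mk (Ideal.span (relSet K R d)) p = 0 :=
  Ideal.Quotient.eq_zero_iff_mem.mpr (Ideal.subset_span hp)

lemma gen_add (f g : R) (i : MIdx d) :
    gen K R (f + g) i = gen K R f i + gen K R g i := by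
  have h := mk_rel (K := K) (Or.inl ⟨f, g, i, rfl⟩)
  simp only [map_sub] at h
  unfold gen
  rw [sub_sub, sub_eq_zero] at h
  exact h

lemma gen_mul (f g : R) (i : MIdx d) :
    gen K R (f * g) i = ∑ q ∈ Finset.HasAntidiagonal.antidiagonal i, gen K R f q.1 * gen K R g q.2 := by
  have h := mk_rel (K := K) (Or.inr (Or.inl ⟨f, g, i, rfl⟩))
  simp only [map_sub, map_sum, map_mul] at h
  unfold gen
  rw [sub_eq_zero] at h
  exact h

lemma gen_zero_idx (f : R) : gen K R f (0 : MIdx d) = algebraMap R (Rd K R d) f := by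
  have h := mk_rel (K := K) (d := d) (Or.inr (Or.inr (Or.inl ⟨f, rfl⟩)))
  simp only [map_sub] at h
  have h2 : algebraMap R (Rd K R d) f
      = Ideal.Quotient.mk (Ideal.span (relSet K R d)) (MvPolynomial.C f) := rfl
  unfold gen
  rw [h2]
  linear_combination h

lemma gen_alg (c : K) (i : MIdx d) (hi : 1 ≤ deg i) :
    gen K R (algebraMap K R c) i = 0 :=
  mk_rel (Or.inr (Or.inr (Or.inr ⟨c, i, hi, rfl⟩)))

lemma deg_eq_zero_iff (i : MIdx d) : deg i = 0 ↔ i = 0 := by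
  unfold deg Finsupp.sum
  rw [Finset.sum_eq_zero_iff]
  constructor
  · intro h; ext x
    by_cases hx : x ∈ i.support
    · exact h x hx
    · simpa [Finsupp.notMem_support_iff] using hx
  · rintro rfl; simp

lemma deg_add (i j : MIdx d) : deg (i + j) = deg i + deg j := by
  unfold deg
  exact Finsupp.sum_add_index' (fun _ => rfl) (fun _ _ _ => rfl)

lemma deg_single (a : Fin d) : deg (Finsupp.single a 1) = 1 := by
  unfold deg
  simp [Finsupp.sum_single_index]

end Paper

section Comb

variable {d : ℕ} {M : Type} [AddCommMonoid M]

lemma fs_shift_add {j k i : Paper.MIdx d} {a c : Fin d} (hjk : j + k = i) (hkc : 1 ≤ k c) :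
    j + (k - Finsupp.single c 1 + Finsupp.single a 1)
      = i - Finsupp.single c 1 + Finsupp.single a 1 := by
  ext x
  have hx := DFunLike.congr_fun hjk x
  simp only [Finsupp.add_apply, Finsupp.tsub_apply, Finsupp.single_apply] at hx hkc ⊢
  by_cases h1 : c = x
  · subst h1
    by_cases h2 : a = c
    · subst h2; simp at hx ⊢; omega
    · simp [h2] at hx ⊢; omega
  · by_cases h2 : a = x
    · subst h2; simp [h1] at hx ⊢; omega
    · simp [h1, h2] at hx ⊢; omega

lemma fs_shift_pos (k : Paper.MIdx d) (a c : Fin d) :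
    1 ≤ (k - Finsupp.single c 1 + Finsupp.single a 1 : Paper.MIdx d) a := by
  simp [Finsupp.add_apply, Finsupp.tsub_apply, Finsupp.single_apply]

lemma fs_shift_shift (k : Paper.MIdx d) (a c : Fin d) (hkc : 1 ≤ k c) :
    k - Finsupp.single c 1 + Finsupp.single a 1 - Finsupp.single a 1 + Finsupp.single c 1 = k := by
  ext x
  simp only [Finsupp.add_apply, Finsupp.tsub_apply, Finsupp.single_apply] at hkc ⊢
  by_cases h1 : c = x
  · subst h1
    by_cases h2 : a = c
    · subst h2; simp at hkc ⊢; omega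
    · simp [h2] at hkc ⊢; omega
  · by_cases h2 : a = x
    · subst h2; simp [h1]
    · simp [h1, h2]

lemma fs_shift_apply (k : Paper.MIdx d) (a c : Fin d) :
    (k - Finsupp.single c 1 + Finsupp.single a 1 : Paper.MIdx d) a
      = (k - Finsupp.single c 1 : Paper.MIdx d) a + 1 := by
  simp [Finsupp.add_apply, Finsupp.single_apply]

lemma fs_back_add {j k i : Paper.MIdx d} {a c : Fin d} (hic : 1 ≤ i c)
    (hjk : j + k = i - Finsupp.single c 1 + Finsupp.single a 1) (hka : 1 ≤ k a) :
    j + (k - Finsupp.single a 1 + Finsupp.single c 1) = i := by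
  ext x
  have hx := DFunLike.congr_fun hjk x
  simp only [Finsupp.add_apply, Finsupp.tsub_apply, Finsupp.single_apply] at hx hka hic ⊢
  by_cases h1 : c = x
  · subst h1
    by_cases h2 : a = c
    · subst h2; simp at hx ⊢; omega
    · simp [h2] at hx ⊢; omega
  · by_cases h2 : a = x
    · subst h2; simp [h1] at hx ⊢; omega
    · simp [h1, h2] at hx ⊢; omega

lemma fs_back_pos (k : Paper.MIdx d) (a c : Fin d) :
    1 ≤ (k - Finsupp.single a 1 + Finsupp.single c 1 : Paper.MIdx d) c := by
  simp [Finsupp.add_apply, Finsupp.tsub_apply, Finsupp.single_apply]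

/-- swap the antidiagonal -/
lemma sum_antidiag_swap (m : Paper.MIdx d) (F : Paper.MIdx d → Paper.MIdx d → M) :
    ∑ p ∈ Finset.HasAntidiagonal.antidiagonal m, F p.1 p.2 = ∑ p ∈ Finset.HasAntidiagonal.antidiagonal m, F p.2 p.1 := by
  refine Finset.sum_nbij' Prod.swap Prod.swap (fun p hp => ?_) (fun p hp => ?_)
    (fun p _ => p.swap_swap) (fun p _ => p.swap_swap) (fun p _ => rfl) <;>
  · rw [Finset.HasAntidiagonal.mem_antidiagonal] at hp ⊢
    rw [Prod.fst_swap, Prod.snd_swap, add_comm]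
    exact hp

/-- The key reindexing identity. -/
lemma shift_sum (H : Paper.MIdx d → Paper.MIdx d → M) (i : Paper.MIdx d) (a c : Fin d)
    (hic : 1 ≤ i c) :
    ∑ p ∈ (Finset.HasAntidiagonal.antidiagonal (i - Finsupp.single c 1 + Finsupp.single a 1) :
          Finset (Paper.MIdx d × Paper.MIdx d)), (p.2 a) • H p.1 p.2
      = ∑ p ∈ (Finset.HasAntidiagonal.antidiagonal i : Finset (Paper.MIdx d × Paper.MIdx d)),
          if 1 ≤ p.2 c then
            ((p.2 - Finsupp.single c 1 : Paper.MIdx d) a + 1) •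
              H p.1 (p.2 - Finsupp.single c 1 + Finsupp.single a 1)
          else 0 := by
  rw [← Finset.sum_filter]
  rw [← Finset.sum_filter_of_ne (p := fun p : Paper.MIdx d × Paper.MIdx d => 1 ≤ p.2 a)
    (fun x _ hne => by
      by_contra h
      rw [Nat.not_le, Nat.lt_one_iff] at h
      rw [h, zero_smul] at hne
      exact hne rfl)]
  refine (Finset.sum_nbij'
    (fun p : Paper.MIdx d × Paper.MIdx d => (p.1, p.2 - Finsupp.single c 1 + Finsupp.single a 1))
    (fun p : Paper.MIdx d × Paper.MIdx d => (p.1, p.2 - Finsupp.single a 1 + Finsupp.single c 1))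
    ?_ ?_ ?_ ?_ ?_).symm
  · intro p hp
    simp only [Finset.mem_filter, Finset.HasAntidiagonal.mem_antidiagonal] at hp ⊢
    exact ⟨fs_shift_add hp.1 hp.2, fs_shift_pos _ _ _⟩
  · intro p hp
    simp only [Finset.mem_filter, Finset.HasAntidiagonal.mem_antidiagonal] at hp ⊢
    exact ⟨fs_back_add hic hp.1 hp.2, fs_back_pos _ _ _⟩
  · intro p hp
    simp only [Finset.mem_filter, Finset.HasAntidiagonal.mem_antidiagonal] at hp
    exact Prod.ext rfl (fs_shift_shift p.2 a c hp.2)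
  · intro p hp
    simp only [Finset.mem_filter, Finset.HasAntidiagonal.mem_antidiagonal] at hp
    exact Prod.ext rfl (fs_shift_shift p.2 c a hp.2)
  · intro p hp
    rw [fs_shift_apply]

end Comb

namespace Paper

variable {K R : Type} [Field K] [CharZero K] [CommRing R] [Algebra K R] {d : ℕ}

/-- the prescribed value of the derivation `V_{a,c}` on the generator `f_i`. -/
noncomputable def sfun (K R : Type) [Field K] [CharZero K] [CommRing R] [Algebra K R] {d : ℕ}
    (a c : Fin d) (f : R) (i : MIdx d) : Rd K R d :=
  if 1 ≤ i c then
    ((i - Finsupp.single c 1 : MIdx d) a + 1) •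
      gen K R f (i - Finsupp.single c 1 + Finsupp.single a 1)
  else 0

lemma sfun_add (a c : Fin d) (f g : R) (i : MIdx d) :
    sfun K R a c (f + g) i = sfun K R a c f i + sfun K R a c g i := by
  unfold sfun
  split_ifs
  · rw [gen_add, smul_add]
  · rw [add_zero]

lemma sfun_zero_idx (a c : Fin d) (f : R) : sfun K R a c f (0 : MIdx d) = 0 := by
  rw [sfun, if_neg]
  simp

lemma sfun_alg (a c : Fin d) (x : K) (i : MIdx d) :
    sfun K R a c (algebraMap K R x) i = 0 := by
  rw [sfun]
  split_ifs with h
  · rw [gen_alg, smul_zero]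
    rw [deg_add, deg_single]
    omega
  · rfl

lemma sfun_mul (a c : Fin d) (f g : R) (i : MIdx d) :
    sfun K R a c (f * g) i
      = ∑ p ∈ (Finset.HasAntidiagonal.antidiagonal i : Finset (MIdx d × MIdx d)),
          (gen K R f p.1 * sfun K R a c g p.2 + gen K R g p.2 * sfun K R a c f p.1) := by
  by_cases hic : 1 ≤ i c
  · rw [sfun, if_pos hic, gen_mul, Finset.smul_sum]
    have hsplit : ∀ p ∈ (Finset.HasAntidiagonal.antidiagonal
          (i - Finsupp.single c 1 + Finsupp.single a 1) : Finset (MIdx d × MIdx d)),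
        ((i - Finsupp.single c 1 : MIdx d) a + 1) • (gen K R f p.1 * gen K R g p.2)
          = (p.1 a) • (gen K R f p.1 * gen K R g p.2)
            + (p.2 a) • (gen K R f p.1 * gen K R g p.2) := by
      intro p hp
      rw [Finset.HasAntidiagonal.mem_antidiagonal] at hp
      rw [← add_smul]
      congr 1
      have h1 := DFunLike.congr_fun hp a
      rw [Finsupp.add_apply] at h1
      rw [h1, fs_shift_apply]
    rw [Finset.sum_congr rfl hsplit, Finset.sum_add_distrib, Finset.sum_add_distrib]
    have hS2 : ∑ p ∈ (Finset.HasAntidiagonal.antidiagonal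
          (i - Finsupp.single c 1 + Finsupp.single a 1) : Finset (MIdx d × MIdx d)),
          (p.2 a) • (gen K R f p.1 * gen K R g p.2)
        = ∑ p ∈ (Finset.HasAntidiagonal.antidiagonal i : Finset (MIdx d × MIdx d)),
            gen K R f p.1 * sfun K R a c g p.2 := by
      rw [shift_sum (fun j k => gen K R f j * gen K R g k) i a c hic]
      refine Finset.sum_congr rfl fun p _ => ?_
      rw [sfun, mul_ite, mul_zero, mul_smul_comm]
    have hS1 : ∑ p ∈ (Finset.HasAntidiagonal.antidiagonal
          (i - Finsupp.single c 1 + Finsupp.single a 1) : Finset (MIdx d × MIdx d)),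
          (p.1 a) • (gen K R f p.1 * gen K R g p.2)
        = ∑ p ∈ (Finset.HasAntidiagonal.antidiagonal i : Finset (MIdx d × MIdx d)),
            gen K R g p.2 * sfun K R a c f p.1 := by
      rw [sum_antidiag_swap _ (fun j k => (j a) • (gen K R f j * gen K R g k))]
      rw [shift_sum (fun j k => gen K R f k * gen K R g j) i a c hic]
      rw [sum_antidiag_swap _ (fun j k => if 1 ≤ k c then
        ((k - Finsupp.single c 1 : MIdx d) a + 1) •
          (gen K R f (k - Finsupp.single c 1 + Finsupp.single a 1) * gen K R g j) else 0)]
      refine Finset.sum_congr rfl fun p _ => ?_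
      rw [sfun, mul_ite, mul_zero, mul_smul_comm]
      congr 1
      rw [mul_comm]
    rw [hS1, hS2, add_comm]
  · rw [sfun, if_neg hic]
    symm
    apply Finset.sum_eq_zero
    intro p hp
    rw [Finset.HasAntidiagonal.mem_antidiagonal] at hp
    have h1 := DFunLike.congr_fun hp c
    rw [Finsupp.add_apply] at h1
    have h2 : p.2 c = 0 := by omega
    have h3 : p.1 c = 0 := by omega
    rw [sfun, sfun, if_neg (by omega), if_neg (by omega), mul_zero, mul_zero, add_zero]

end Paper

namespace Paper

variable {K R : Type} [Field K] [CharZero K] [CommRing R] [Algebra K R] {d : ℕ}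

noncomputable instance instAlgP (d : ℕ) :
    Algebra (MvPolynomial (R × MIdx d) R) (Rd K R d) :=
  Ideal.Quotient.algebra _

instance instTowerP (d : ℕ) :
    IsScalarTower R (MvPolynomial (R × MIdx d) R) (Rd K R d) :=
  Ideal.Quotient.isScalarTower R (MvPolynomial (R × MIdx d) R) _

/-- The quotient map, landing in `Rd`. -/
noncomputable def mkRd (x : MvPolynomial (R × MIdx d) R) : Rd K R d :=
  Ideal.Quotient.mk (Ideal.span (relSet K R d)) x

lemma mkRd_X (f : R) (i : MIdx d) : mkRd (K := K) (MvPolynomial.X (f, i)) = gen K R f i := rfl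

lemma smul_mk (x : MvPolynomial (R × MIdx d) R) (m : Rd K R d) :
    x • m = mkRd (K := K) x * m := by
  rw [Algebra.smul_def]
  rfl

/-- The polynomial-level derivation with prescribed values `sfun` on the variables. -/
noncomputable def Dac (K R : Type) [Field K] [CharZero K] [CommRing R] [Algebra K R] {d : ℕ}
    (a c : Fin d) : Derivation R (MvPolynomial (R × MIdx d) R) (Rd K R d) :=
  MvPolynomial.mkDerivation R (fun p => sfun K R a c p.1 p.2)

lemma Dac_X (a c : Fin d) (f : R) (i : MIdx d) :
    Dac K R a c (MvPolynomial.X (f, i)) = sfun K R a c f i :=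
  MvPolynomial.mkDerivation_X _ _ _

lemma Dac_rel (a c : Fin d) {p : MvPolynomial (R × MIdx d) R} (hp : p ∈ relSet K R d) :
    Dac K R a c p = 0 := by
  rcases hp with ⟨f, g, i, rfl⟩ | ⟨f, g, i, rfl⟩ | ⟨f, rfl⟩ | ⟨x, i, hi, rfl⟩
  · rw [map_sub, map_sub, Dac_X, Dac_X, Dac_X, sfun_add]
    ring
  · rw [map_sub, map_sum, Dac_X, sfun_mul]
    rw [sub_eq_zero]
    refine Finset.sum_congr rfl fun q _ => ?_
    rw [Derivation.leibniz, Dac_X, Dac_X, smul_mk, smul_mk, mkRd_X, mkRd_X]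
  · rw [map_sub, Dac_X, sfun_zero_idx, ← MvPolynomial.algebraMap_eq, Derivation.map_algebraMap,
      sub_zero]
  · rw [Dac_X, sfun_alg]

lemma mkRd_zero_of_mem {x : MvPolynomial (R × MIdx d) R}
    (hx : x ∈ Ideal.span (relSet K R d)) : mkRd (K := K) x = 0 :=
  Ideal.Quotient.eq_zero_iff_mem.mpr hx

lemma Dac_span (a c : Fin d) {x : MvPolynomial (R × MIdx d) R}
    (hx : x ∈ Ideal.span (relSet K R d)) : Dac K R a c x = 0 := by
  induction hx using Submodule.span_induction with
  | mem y hy => exact Dac_rel a c hy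
  | zero => exact map_zero _
  | add y z hy hz ihy ihz => rw [map_add, ihy, ihz, add_zero]
  | smul t y hy ihy =>
      rw [smul_eq_mul, Derivation.leibniz, ihy, smul_zero, zero_add, smul_mk,
        mkRd_zero_of_mem hy, zero_mul]

/-- The induced derivation on the quotient. -/
noncomputable def Vac (K R : Type) [Field K] [CharZero K] [CommRing R] [Algebra K R] {d : ℕ}
    (a c : Fin d) : Derivation R (Rd K R d) (Rd K R d) where
  toLinearMap := @Submodule.liftQ R (MvPolynomial (R × MIdx d) R) _ _ _
    ((Ideal.span (relSet K R d)).restrictScalars R) R (Rd K R d) _ _ Algebra.toModule (RingHom.id R)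
    (Dac K R a c).toLinearMap (fun x hx => Dac_span a c hx)
  map_one_eq_zero' := by
    show Dac K R a c (1 : MvPolynomial (R × MIdx d) R) = 0
    exact Derivation.map_one_eq_zero _
  leibniz' := by
    intro x y
    obtain ⟨x, rfl⟩ := Ideal.Quotient.mk_surjective x
    obtain ⟨y, rfl⟩ := Ideal.Quotient.mk_surjective y
    show Dac K R a c (x * y)
      = mkRd (K := K) x • Dac K R a c y + mkRd (K := K) y • Dac K R a c x
    rw [Derivation.leibniz, smul_mk, smul_mk, smul_eq_mul, smul_eq_mul]

lemma Vac_mk (a c : Fin d) (x : MvPolynomial (R × MIdx d) R) :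
    Vac K R a c (mkRd (K := K) x) = Dac K R a c x :=
  rfl

lemma Vac_gen (a c : Fin d) (f : R) (i : MIdx d) :
    Vac K R a c (gen K R f i) = sfun K R a c f i := by
  have h := Vac_mk (K := K) (R := R) a c (MvPolynomial.X (f, i))
  rw [Dac_X, mkRd_X] at h
  exact h

end Paper

namespace Paper

variable {K R : Type} [Field K] [CharZero K] [CommRing R] [Algebra K R] {d : ℕ}

/-- The quotient map as an `R`-algebra homomorphism into `Rd`. -/
noncomputable def mkRdA (K R : Type) [Field K] [CharZero K] [CommRing R] [Algebra K R] (d : ℕ) :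
    MvPolynomial (R × MIdx d) R →ₐ[R] Rd K R d :=
  Ideal.Quotient.mkₐ R (Ideal.span (relSet K R d))

lemma mkRdA_surjective : Function.Surjective (mkRdA K R d) :=
  Ideal.Quotient.mkₐ_surjective R _

lemma adjoin_gens :
    Algebra.adjoin R (Set.range fun p : R × MIdx d => gen K R p.1 p.2) = ⊤ := by
  have h1 : Algebra.adjoin R (Set.range fun p : R × MIdx d => gen K R p.1 p.2)
      = (Algebra.adjoin R
          (Set.range (MvPolynomial.X : R × MIdx d → MvPolynomial (R × MIdx d) R))).map
            (mkRdA K R d) := by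
    rw [AlgHom.map_adjoin, ← Set.range_comp]
    rfl
  rw [h1, MvPolynomial.adjoin_range_X, Algebra.map_top]
  exact (AlgHom.range_eq_top _).mpr mkRdA_surjective

lemma derivation_ext (V W : Derivation R (Rd K R d) (Rd K R d))
    (h : ∀ (f : R) (i : MIdx d), V (gen K R f i) = W (gen K R f i)) : V = W := by
  have heq : Set.EqOn V W (Set.range fun p : R × MIdx d => gen K R p.1 p.2) := by
    rintro x ⟨p, rfl⟩
    exact h p.1 p.2
  have h2 := Derivation.eqOn_adjoin heq
  ext x
  exact h2 (by rw [adjoin_gens]; trivial)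

lemma derivation_sum_apply {ι : Type} (s : Finset ι)
    (D : ι → Derivation R (Rd K R d) (Rd K R d)) (x : Rd K R d) :
    (∑ a ∈ s, D a) x = ∑ a ∈ s, D a x := by
  induction s using Finset.cons_induction with
  | empty => simp
  | cons a s ha ih => rw [Finset.sum_cons, Finset.sum_cons, Derivation.add_apply, ih]

end Paper


/-- For every `d×d` matrix `v` over `K` there is a unique
`R`-linear derivation `V` of `R^𝐝` with
`V(f_i) = Σ_{a,b : i(b) ≥ 1} v^a_b ((i−e_b)(a)+1) f_{i−e_b+e_a}`
(the infinitesimal form of the `GL_d(K)`-action on `R^𝐝`). -/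
theorem statement7 (K R : Type) [Field K] [CharZero K] [CommRing R] [Algebra K R]
    (d : ℕ) (hd : 1 ≤ d) (v : Matrix (Fin d) (Fin d) K) :
    ∃! V : Derivation R (Paper.Rd K R d) (Paper.Rd K R d),
      ∀ (f : R) (i : Paper.MIdx d), 1 ≤ Paper.deg i →
        V (Paper.gen K R f i) =
          ∑ a : Fin d, ∑ c : Fin d,
            if 1 ≤ i c then
              algebraMap R (Paper.Rd K R d) (algebraMap K R (v a c)) *
                ((((i - Finsupp.single c 1 : Paper.MIdx d) a + 1 : ℕ) : Paper.Rd K R d)) *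
                Paper.gen K R f ((i - Finsupp.single c 1 : Paper.MIdx d) + Finsupp.single a 1)
            else 0 := by
  classical
  set C : Fin d → Fin d → Paper.Rd K R d :=
    fun a c => algebraMap R (Paper.Rd K R d) (algebraMap K R (v a c)) with hC
  set V : Derivation R (Paper.Rd K R d) (Paper.Rd K R d) :=
    ∑ a : Fin d, ∑ c : Fin d, C a c • Paper.Vac K R a c with hV
  have hVgen : ∀ (f : R) (i : Paper.MIdx d),
      V (Paper.gen K R f i) =
        ∑ a : Fin d, ∑ c : Fin d,
          if 1 ≤ i c then
            C a c * ((((i - Finsupp.single c 1 : Paper.MIdx d) a + 1 : ℕ) : Paper.Rd K R d)) *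
              Paper.gen K R f ((i - Finsupp.single c 1 : Paper.MIdx d) + Finsupp.single a 1)
          else 0 := by
    intro f i
    rw [hV, Paper.derivation_sum_apply]
    refine Finset.sum_congr rfl fun a _ => ?_
    rw [Paper.derivation_sum_apply]
    refine Finset.sum_congr rfl fun c _ => ?_
    rw [Derivation.smul_apply, Paper.Vac_gen, Paper.sfun, smul_ite, smul_zero]
    split_ifs with h
    · rw [smul_comm, smul_eq_mul, nsmul_eq_mul, ← mul_assoc]
      ring
    · rfl
  refine ⟨V, fun f i _ => hVgen f i, ?_⟩
  intro W hW
  refine Paper.derivation_ext W V fun f i => ?_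
  rcases Nat.eq_zero_or_pos (Paper.deg i) with h0 | hpos
  · rw [(Paper.deg_eq_zero_iff i).mp h0, Paper.gen_zero_idx,
      Derivation.map_algebraMap, Derivation.map_algebraMap]
  · rw [hW f i hpos, hVgen f i]
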